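/- If ψ_n → ψ in H¹(ℝ^d), then with √ρ_n := |ψ_n|, Λ_n := Im(φ̄_n ∇ψ_n) (φ_n a polar factor of ψ_n) and similarly √ρ := |ψ|, Λ := Im(φ̄∇ψ), one has ∇√ρ_n → ∇√ρ and Λ_n → Λ strongly in L²(ℝ^d). -/

import Mathlib

open MeasureTheory Complex Filter Topology

noncomputable section

/-- Partial derivative of a complex-valued function in direction `i`. -/
def pdc {d : ℕ} (i : Fin d) (f : EuclideanSpace ℝ (Fin d) → ℂ)
    (x : EuclideanSpace ℝ (Fin d)) : ℂ :=
  fderiv ℝ f x (EuclideanSpace.single i 1)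

/-- Hydrodynamic quantity `∇√ρ = Re(φ̄∇ψ)` associated to a wave function `ψ`
with polar factor `φ`. -/
def gradSqrtRho {d : ℕ} (ψ φ : EuclideanSpace ℝ (Fin d) → ℂ)
    (x : EuclideanSpace ℝ (Fin d)) : EuclideanSpace ℝ (Fin d) :=
  WithLp.toLp 2 (fun i => ((starRingEnd ℂ) (φ x) * pdc i ψ x).re)

/-- Hydrodynamic quantity `Λ = Im(φ̄∇ψ)`. -/
def lambdaHyd {d : ℕ} (ψ φ : EuclideanSpace ℝ (Fin d) → ℂ)
    (x : EuclideanSpace ℝ (Fin d)) : EuclideanSpace ℝ (Fin d) :=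
  WithLp.toLp 2 (fun i => ((starRingEnd ℂ) (φ x) * pdc i ψ x).im)

open Metric ENNReal

set_option maxHeartbeats 1000000

def cvec {d : ℕ} (f : Fin d → ℂ) : EuclideanSpace ℂ (Fin d) := WithLp.toLp 2 f

def rvec {d : ℕ} (f : Fin d → ℝ) : EuclideanSpace ℝ (Fin d) := WithLp.toLp 2 f

def theta {d : ℕ} (ψ : EuclideanSpace ℝ (Fin d) → ℂ)
    (x : EuclideanSpace ℝ (Fin d)) : ℂ :=
  if ψ x = 0 then 0 else (‖ψ x‖⁻¹ : ℝ) • (starRingEnd ℂ) (ψ x)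

lemma theta_norm_le {d : ℕ} (ψ : EuclideanSpace ℝ (Fin d) → ℂ)
    (x : EuclideanSpace ℝ (Fin d)) : ‖theta ψ x‖ ≤ 1 := by
  unfold theta
  split_ifs with h
  · simp
  · rw [norm_smul, norm_inv, norm_norm, RingHomIsometric.norm_map]
    rw [inv_mul_cancel₀ (norm_ne_zero_iff.2 h)]

lemma measurable_theta {d : ℕ} (ψ : EuclideanSpace ℝ (Fin d) → ℂ)
    (hψ : Continuous ψ) : Measurable (theta ψ) := by
  unfold theta
  have hsm : MeasurableSet {x : EuclideanSpace ℝ (Fin d) | ψ x = 0} :=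
    (isClosed_singleton.preimage hψ).measurableSet
  exact Measurable.ite hsm measurable_const
    (((hψ.norm.measurable).inv).smul ((Complex.continuous_conj.comp hψ).measurable))

lemma measurable_pdc {d : ℕ} (i : Fin d) (f : EuclideanSpace ℝ (Fin d) → ℂ) :
    Measurable (pdc i f) :=
  measurable_fderiv_apply_const ℝ f (EuclideanSpace.single i 1)

lemma euclid_norm_le {d : ℕ} {𝕜₁ 𝕜₂ : Type} [RCLike 𝕜₁] [RCLike 𝕜₂]
    (a : EuclideanSpace 𝕜₁ (Fin d)) (b : EuclideanSpace 𝕜₂ (Fin d))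
    (h : ∀ i, ‖a i‖ ≤ ‖b i‖) : ‖a‖ ≤ ‖b‖ := by
  rw [EuclideanSpace.norm_eq, EuclideanSpace.norm_eq]
  exact Real.sqrt_le_sqrt (Finset.sum_le_sum fun i _ =>
    pow_le_pow_left₀ (norm_nonneg _) (h i) 2)

lemma euclid_norm_le_of_forall {d : ℕ} {𝕜₁ : Type} [RCLike 𝕜₁]
    (a : EuclideanSpace 𝕜₁ (Fin d)) {C : ℝ} (hC : 0 ≤ C)
    (h : ∀ i, ‖a i‖ ≤ C) : ‖a‖ ≤ Real.sqrt d * C := by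
  rw [EuclideanSpace.norm_eq]
  calc Real.sqrt (∑ i : Fin d, ‖a i‖ ^ 2)
      ≤ Real.sqrt (∑ _i : Fin d, C ^ 2) :=
        Real.sqrt_le_sqrt (Finset.sum_le_sum fun i _ =>
          pow_le_pow_left₀ (norm_nonneg _) (h i) 2)
    _ = Real.sqrt ((d : ℝ) * C ^ 2) := by
        rw [Finset.sum_const, Finset.card_univ, Fintype.card_fin, nsmul_eq_mul]
    _ = Real.sqrt d * C := by
        rw [Real.sqrt_mul (Nat.cast_nonneg d), Real.sqrt_sq hC]


theorem fderiv_ae_zero_on_zero {d : ℕ} (ψ : EuclideanSpace ℝ (Fin d) → ℂ)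
    (hψ : Differentiable ℝ ψ) :
    ∀ᵐ x ∂(volume : Measure (EuclideanSpace ℝ (Fin d))), ψ x = 0 → fderiv ℝ ψ x = 0 := by
  set s : Set (EuclideanSpace ℝ (Fin d)) := {x | ψ x = 0} with hs_def
  have hs : MeasurableSet s := (isClosed_singleton.preimage hψ.continuous).measurableSet
  have hdens := Besicovitch.ae_tendsto_measure_inter_div_of_measurableSet
    (volume : Measure (EuclideanSpace ℝ (Fin d))) hs
  filter_upwards [hdens] with x hx hxs
  have hxmem : x ∈ s := hxs
  simp only [Set.indicator_of_mem hxmem, Pi.one_apply] at hx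
  by_contra hDf
  obtain ⟨u, hu⟩ : ∃ u, fderiv ℝ ψ x u ≠ 0 := by
    by_contra h
    push_neg at h
    exact hDf (ContinuousLinearMap.ext fun u => h u)
  set T := fderiv ℝ ψ x with hT
  have hu0 : u ≠ 0 := fun h => hu (by simp [h])
  set v : EuclideanSpace ℝ (Fin d) := ‖u‖⁻¹ • u with hv
  have hv1 : ‖v‖ = 1 := by
    simp [hv, norm_smul, abs_of_nonneg, inv_mul_cancel₀ (norm_ne_zero_iff.2 hu0)]
  set c : ℝ := ‖T v‖ with hc
  have hc0 : 0 < c := by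
    have hTv : T v = ‖u‖⁻¹ • T u := by simp [hv]
    rw [hc, hTv, norm_smul, norm_inv, norm_norm]
    exact mul_pos (inv_pos.2 (norm_pos_iff.2 hu0)) (norm_pos_iff.2 hu)
  set ε : ℝ := c / (4 * (‖T‖ + 1)) with hε
  have hTn : (0:ℝ) < ‖T‖ + 1 := by positivity
  have hε0 : 0 < ε := by positivity
  have hε1 : ε ≤ 1 := by
    have hcT : c ≤ ‖T‖ := by simpa [hv1] using T.le_opNorm v
    rw [hε, div_le_one (by positivity)]
    nlinarith [norm_nonneg T]
  have hεT : ‖T‖ * ε ≤ c / 4 := by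
    have hεc : ε * (4 * (‖T‖ + 1)) = c := by
      rw [hε]; field_simp
    nlinarith [norm_nonneg T, hε0]
  have hder := ((hψ x).hasFDerivAt).isLittleO
  rw [Asymptotics.isLittleO_iff] at hder
  have hcl : (0:ℝ) < c / 8 := by positivity
  obtain ⟨δ, hδ0, hδ⟩ := Metric.eventually_nhds_iff.1 (hder hcl)
  -- key geometric claim: a small ball near x misses s
  have key : ∀ t : ℝ, 0 < t → t < δ / 2 →
      closedBall (x + t • v) (ε * t) ⊆ closedBall x (2 * t) \ s := by
    intro t ht htδ y hy
    have hy1 : ‖y - (x + t • v)‖ ≤ ε * t := by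
      simpa [dist_eq_norm] using hy
    have hyx : ‖y - x‖ ≤ 2 * t := by
      have hsplit : y - x = (y - (x + t • v)) + t • v := by abel
      rw [hsplit]
      calc ‖(y - (x + t • v)) + t • v‖ ≤ ‖y - (x + t • v)‖ + ‖t • v‖ := norm_add_le _ _
        _ ≤ ε * t + t := by
            rw [norm_smul, hv1]
            simp only [Real.norm_eq_abs, abs_of_pos ht, mul_one]
            linarith
        _ ≤ 2 * t := by nlinarith
    refine ⟨by simpa [dist_eq_norm] using hyx, ?_⟩
    intro hys
    have hψy : ψ y = 0 := hys
    have hψx : ψ x = 0 := hxs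
    have hclose : dist y x < δ := by
      rw [dist_eq_norm]
      exact lt_of_le_of_lt hyx (by linarith)
    have hlo := hδ hclose
    rw [hψy, hψx] at hlo
    simp only [sub_zero, zero_sub, norm_neg] at hlo
    -- hlo : ‖T (y - x)‖ ≤ c/8 * ‖y - x‖
    have hub : ‖T (y - x)‖ ≤ c / 8 * (2 * t) := by
      refine le_trans hlo ?_
      have hnn : (0:ℝ) ≤ c / 8 := by positivity
      exact mul_le_mul_of_nonneg_left hyx hnn
    have hεt : ‖T‖ * (ε * t) ≤ c / 4 * t := by
      rw [← mul_assoc]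
      exact mul_le_mul_of_nonneg_right hεT ht.le
    have harg : T (t • v) = T (y - x) - T (y - (x + t • v)) := by
      rw [← map_sub]; congr 1; abel
    have htv : ‖T (t • v)‖ = t * c := by
      rw [T.map_smul, norm_smul, Real.norm_eq_abs, abs_of_pos ht, hc]
    have h2 : ‖T (y - (x + t • v))‖ ≤ ‖T‖ * (ε * t) :=
      le_trans (T.le_opNorm _) (mul_le_mul_of_nonneg_left hy1 T.opNorm_nonneg)
    have h5 : t * c ≤ ‖T (y - x)‖ + ‖T (y - (x + t • v))‖ := by
      rw [← htv, harg]
      exact norm_sub_le _ _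
    nlinarith
  -- measure-theoretic contradiction
  set V : ℝ≥0∞ := volume (ball (0 : EuclideanSpace ℝ (Fin d)) 1) with hV
  have hV0 : V ≠ 0 := (measure_ball_pos _ _ one_pos).ne'
  have hVtop : V ≠ ⊤ := measure_ball_lt_top.ne
  have hfr : Module.finrank ℝ (EuclideanSpace ℝ (Fin d)) = d := finrank_euclideanSpace_fin
  set L : ℝ≥0∞ := 1 - ENNReal.ofReal ((ε / 2) ^ d) with hL
  have hL1 : L < 1 := by
    apply ENNReal.sub_lt_self ENNReal.one_ne_top one_ne_zero
    simp only [ne_eq, ENNReal.ofReal_eq_zero, not_le]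
    positivity
  have hratio : ∀ r : ℝ, 0 < r → r < δ →
      volume (s ∩ closedBall x r) / volume (closedBall x r) ≤ L := by
    intro r hr hrδ
    set t := r / 2 with htdef
    have ht : 0 < t := by positivity
    have htδ : t < δ / 2 := by rw [htdef]; linarith
    have hsub := key t ht htδ
    have hBmeas : volume (closedBall x r) = ENNReal.ofReal (r ^ d) * V := by
      rw [Measure.addHaar_closedBall _ _ hr.le, hfr]
    have hsmall : volume (closedBall (x + t • v) (ε * t)) = ENNReal.ofReal ((ε * t) ^ d) * V := by
      rw [Measure.addHaar_closedBall _ _ (by positivity), hfr]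
    have hr2t : r = 2 * t := by rw [htdef]; ring
    -- disjoint decomposition
    have hdisj : Disjoint (s ∩ closedBall x r) (closedBall (x + t • v) (ε * t)) := by
      rw [Set.disjoint_left]
      intro z hz hz2
      exact (hsub (by exact hz2)).2 hz.1
    have hunion : volume (s ∩ closedBall x r) + volume (closedBall (x + t • v) (ε * t))
        ≤ volume (closedBall x r) := by
      rw [← measure_union hdisj measurableSet_closedBall]
      apply measure_mono
      intro z hz
      rcases hz with hz | hz
      · exact hz.2
      · rw [hr2t]
        exact (hsub hz).1
    have hkey2 : volume (s ∩ closedBall x r) ≤ L * volume (closedBall x r) := by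
      have hLmul : L * volume (closedBall x r)
          = volume (closedBall x r) - volume (closedBall (x + t • v) (ε * t)) := by
        rw [hL, hBmeas, hsmall, ENNReal.sub_mul (fun _ _ => by
          exact ENNReal.mul_ne_top ENNReal.ofReal_ne_top hVtop), one_mul]
        congr 1
        rw [← mul_assoc, ← ENNReal.ofReal_mul (by positivity)]
        congr 2
        rw [← mul_pow]
        congr 1
        rw [hr2t]
        ring
      rw [hLmul]
      exact ENNReal.le_sub_of_add_le_right measure_closedBall_lt_top.ne hunion
    rw [ENNReal.div_le_iff_le_mul]
    · exact hkey2
    · left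
      rw [hBmeas]
      simp only [ne_eq, mul_eq_zero, not_or]
      exact ⟨by simp [ENNReal.ofReal_eq_zero]; positivity, hV0⟩
    · left
      rw [hBmeas]
      exact ENNReal.mul_ne_top ENNReal.ofReal_ne_top hVtop
  -- contradiction with density 1
  have hev1 : ∀ᶠ r in 𝓝[>] (0:ℝ),
      volume (s ∩ closedBall x r) / volume (closedBall x r) ≤ L := by
    filter_upwards [Ioo_mem_nhdsGT_of_mem (Set.left_mem_Ico.2 hδ0)] with r hr
    exact hratio r hr.1 hr.2
  have hev2 : ∀ᶠ r in 𝓝[>] (0:ℝ),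
      L < volume (s ∩ closedBall x r) / volume (closedBall x r) :=
    hx.eventually (eventually_gt_nhds hL1)
  obtain ⟨r, h1, h2⟩ := (hev1.and hev2).exists
  exact absurd h1 (not_le.2 h2)


lemma polar_theta {d : ℕ} (ψ φ : EuclideanSpace ℝ (Fin d) → ℂ)
    (hψ : Differentiable ℝ ψ)
    (hpolar : ∀ᵐ x ∂(volume : Measure (EuclideanSpace ℝ (Fin d))), (‖ψ x‖ : ℂ) * φ x = ψ x) :
    ∀ᵐ x ∂(volume : Measure (EuclideanSpace ℝ (Fin d))),
      ∀ i, (starRingEnd ℂ) (φ x) * pdc i ψ x = theta ψ x * pdc i ψ x := by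
  filter_upwards [hpolar, fderiv_ae_zero_on_zero ψ hψ] with x h1 h2 i
  by_cases hx : ψ x = 0
  · have hz : pdc i ψ x = 0 := by
      simp only [pdc]; rw [h2 hx]; rfl
    rw [hz, mul_zero, mul_zero]
  · have hn : (‖ψ x‖ : ℂ) ≠ 0 := by
      simp only [ne_eq, Complex.ofReal_eq_zero]
      exact norm_ne_zero_iff.2 hx
    have hφx : φ x = (‖ψ x‖ : ℂ)⁻¹ * ψ x := by
      have h3 : (‖ψ x‖ : ℂ)⁻¹ * ((‖ψ x‖ : ℂ) * φ x) = (‖ψ x‖ : ℂ)⁻¹ * ψ x := by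
        rw [h1]
      rwa [← mul_assoc, inv_mul_cancel₀ hn, one_mul] at h3
    have hconj : (starRingEnd ℂ) (φ x) = theta ψ x := by
      rw [hφx, map_mul, map_inv₀, Complex.conj_ofReal]
      simp only [theta]
      rw [if_neg hx, Complex.real_smul, Complex.ofReal_inv]
    rw [hconj]

lemma Bterm_tendsto {d : ℕ}
    (ψn : ℕ → EuclideanSpace ℝ (Fin d) → ℂ) (ψ : EuclideanSpace ℝ (Fin d) → ℂ)
    (hψndiff : ∀ n, Differentiable ℝ (ψn n)) (hψdiff : Differentiable ℝ ψ)
    (hψnL2 : ∀ n, MemLp (ψn n) 2 volume) (hψL2 : MemLp ψ 2 volume)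
    (hgradL2 : MemLp (fun x => fderiv ℝ ψ x) 2 volume)
    (hconvL2 : Tendsto (fun n => eLpNorm (fun x => ψn n x - ψ x) 2 volume) atTop (𝓝 0)) :
    Tendsto (fun n => eLpNorm (fun x =>
      cvec (fun i => (theta (ψn n) x - theta ψ x) * pdc i ψ x))
      2 volume) atTop (𝓝 0) := by
  set B : ℕ → EuclideanSpace ℝ (Fin d) → EuclideanSpace ℂ (Fin d) :=
    fun n x => cvec (fun i => (theta (ψn n) x - theta ψ x) * pdc i ψ x) with hB
  have hBsm : ∀ n, StronglyMeasurable (B n) := by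
    intro n
    have hpi : Measurable (fun x => (fun i => (theta (ψn n) x - theta ψ x) * pdc i ψ x :
        Fin d → ℂ)) := by
      apply measurable_pi_lambda
      intro i
      exact ((measurable_theta _ (hψndiff n).continuous).sub
        (measurable_theta _ hψdiff.continuous)).mul (measurable_pdc i ψ)
    exact (EuclideanSpace.equiv (Fin d) ℂ).symm.continuous.comp_stronglyMeasurable
      hpi.stronglyMeasurable
  have hBnnmeas : ∀ n, Measurable (fun x => ((‖B n x‖₊ : ℝ≥0∞))) := by
    intro n
    have he : (fun x => ((‖B n x‖₊ : ℝ≥0∞))) = fun x => ENNReal.ofReal ‖B n x‖ := by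
      funext x
      exact (ofReal_norm _).symm
    rw [he]
    exact ENNReal.measurable_ofReal.comp (hBsm n).norm.measurable
  set g : EuclideanSpace ℝ (Fin d) → ℝ :=
    fun x => Real.sqrt d * (2 * ‖fderiv ℝ ψ x‖) with hg
  have hgnn : ∀ x, 0 ≤ g x := by
    intro x
    apply mul_nonneg (Real.sqrt_nonneg _)
    positivity
  have hgL2 : MemLp g 2 (volume : Measure (EuclideanSpace ℝ (Fin d))) := by
    have h := (hgradL2.norm.const_mul (2 : ℝ)).const_mul (Real.sqrt d)
    simpa [hg, mul_assoc] using h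
  have hpdc_le : ∀ i (x : EuclideanSpace ℝ (Fin d)), ‖pdc i ψ x‖ ≤ ‖fderiv ℝ ψ x‖ := by
    intro i x
    simp only [pdc]
    have h := (fderiv ℝ ψ x).le_opNorm (EuclideanSpace.single i 1)
    rwa [EuclideanSpace.norm_single, norm_one, mul_one] at h
  have hbd : ∀ n x, ‖B n x‖ ≤ g x := by
    intro n x
    apply euclid_norm_le_of_forall _ (by positivity)
    intro i
    show ‖(theta (ψn n) x - theta ψ x) * pdc i ψ x‖ ≤ 2 * ‖fderiv ℝ ψ x‖
    rw [norm_mul]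
    have h1 : ‖theta (ψn n) x - theta ψ x‖ ≤ 2 := by
      calc ‖theta (ψn n) x - theta ψ x‖ ≤ ‖theta (ψn n) x‖ + ‖theta ψ x‖ := norm_sub_le _ _
        _ ≤ 2 := by linarith [theta_norm_le (ψn n) x, theta_norm_le ψ x]
    exact mul_le_mul h1 (hpdc_le i x) (norm_nonneg _) (by norm_num)
  apply tendsto_of_subseq_tendsto
  intro ns hns
  have htim : TendstoInMeasure volume (fun k => ψn (ns k)) atTop ψ := by
    apply tendstoInMeasure_of_tendsto_eLpNorm (p := 2) two_ne_zero
      (fun k => (hψnL2 (ns k)).aestronglyMeasurable) hψL2.aestronglyMeasurable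
    exact hconvL2.comp hns
  obtain ⟨ms, hms, hae⟩ := htim.exists_seq_tendsto_ae
  refine ⟨ms, ?_⟩
  have hIlim : Tendsto
      (fun k => ∫⁻ x, ((‖B (ns (ms k)) x‖₊ : ℝ≥0∞)) ^ (2:ℝ) ∂volume) atTop (𝓝 0) := by
    have h0 : (0:ℝ≥0∞) = ∫⁻ (_x : EuclideanSpace ℝ (Fin d)), 0 ∂volume := by
      rw [lintegral_zero]
    rw [h0]
    apply tendsto_lintegral_of_dominated_convergence
      (bound := fun x => ((‖g x‖₊ : ℝ≥0∞)) ^ (2:ℝ))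
    · intro k
      exact ENNReal.continuous_rpow_const.measurable.comp (hBnnmeas (ns (ms k)))
    · intro k
      apply Eventually.of_forall
      intro x
      apply ENNReal.rpow_le_rpow _ (by norm_num)
      rw [ENNReal.coe_le_coe, ← NNReal.coe_le_coe, coe_nnnorm, coe_nnnorm,
        Real.norm_of_nonneg (hgnn x)]
      exact hbd _ x
    · have h2 : eLpNorm g 2 volume < ⊤ := hgL2.2
      rw [eLpNorm_eq_lintegral_rpow_enorm_toReal (by norm_num) (by norm_num),
        ENNReal.toReal_ofNat] at h2
      intro hcon
      rw [show (∫⁻ x, ‖g x‖ₑ ^ (2:ℝ) ∂volume) = ⊤ from hcon] at h2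
      simp [ENNReal.top_rpow_of_pos] at h2
    · filter_upwards [hae, fderiv_ae_zero_on_zero ψ hψdiff] with x hx hz
      by_cases hψx : ψ x = 0
      · have hzero : ∀ k, ((‖B (ns (ms k)) x‖₊ : ℝ≥0∞)) ^ (2:ℝ) = 0 := by
          intro k
          have hzB : B (ns (ms k)) x = 0 := by
            ext i
            show (theta (ψn (ns (ms k))) x - theta ψ x) * pdc i ψ x = 0
            have hp : pdc i ψ x = 0 := by
              simp only [pdc]; rw [hz hψx]; rfl
            rw [hp, mul_zero]
          rw [hzB]
          simp [ENNReal.zero_rpow_of_pos]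
        simp only [hzero]
        exact tendsto_const_nhds
      · have hnz : ‖ψ x‖ ≠ 0 := norm_ne_zero_iff.2 hψx
        have hcont : Tendsto (fun z : ℂ => (‖z‖⁻¹ : ℝ) • (starRingEnd ℂ) z)
            (𝓝 (ψ x)) (𝓝 ((‖ψ x‖⁻¹ : ℝ) • (starRingEnd ℂ) (ψ x))) :=
          Tendsto.smul ((continuous_norm.tendsto (ψ x)).inv₀ hnz)
            (Complex.continuous_conj.tendsto (ψ x))
        have hev : ∀ᶠ k in atTop, ψn (ns (ms k)) x ≠ 0 :=
          hx.eventually (eventually_ne_nhds hψx)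
        have htheta : Tendsto (fun k => theta (ψn (ns (ms k))) x) atTop
            (𝓝 (theta ψ x)) := by
          have hlim := hcont.comp hx
          have heq : (fun k => (‖ψn (ns (ms k)) x‖⁻¹ : ℝ) •
              (starRingEnd ℂ) (ψn (ns (ms k)) x)) =ᶠ[atTop]
              (fun k => theta (ψn (ns (ms k))) x) := by
            filter_upwards [hev] with k hk
            simp only [theta]
            rw [if_neg hk]
          have h3 := hlim.congr' heq
          have h4 : theta ψ x = (‖ψ x‖⁻¹ : ℝ) • (starRingEnd ℂ) (ψ x) := by
            simp only [theta]; rw [if_neg hψx]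
          rwa [← h4] at h3
        have hBlim : Tendsto (fun k => ‖B (ns (ms k)) x‖) atTop (𝓝 0) := by
          have hub : ∀ k, ‖B (ns (ms k)) x‖ ≤
              Real.sqrt d * (‖theta (ψn (ns (ms k))) x - theta ψ x‖ * ‖fderiv ℝ ψ x‖) := by
            intro k
            apply euclid_norm_le_of_forall _ (by positivity)
            intro i
            show ‖(theta (ψn (ns (ms k))) x - theta ψ x) * pdc i ψ x‖ ≤ _
            rw [norm_mul]
            exact mul_le_mul_of_nonneg_left (hpdc_le i x) (norm_nonneg _)
          have hmul : Tendsto (fun k =>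
              Real.sqrt d * (‖theta (ψn (ns (ms k))) x - theta ψ x‖ * ‖fderiv ℝ ψ x‖))
              atTop (𝓝 0) := by
            have h5 : Tendsto (fun k => ‖theta (ψn (ns (ms k))) x - theta ψ x‖)
                atTop (𝓝 0) := by
              have h6 := htheta.sub (tendsto_const_nhds (x := theta ψ x))
              rw [sub_self] at h6
              simpa using h6.norm
            have h7 := (h5.mul_const ‖fderiv ℝ ψ x‖).const_mul (Real.sqrt d)
            simpa using h7
          exact squeeze_zero (fun k => norm_nonneg _) hub hmul
        have h1 : Tendsto (fun k => ((‖B (ns (ms k)) x‖₊ : ℝ≥0∞))) atTop (𝓝 0) := by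
          have h8 := ENNReal.tendsto_ofReal hBlim
          simp only [ENNReal.ofReal_zero] at h8
          have h9 : (fun k => ENNReal.ofReal ‖B (ns (ms k)) x‖)
              = fun k => ((‖B (ns (ms k)) x‖₊ : ℝ≥0∞)) := by
            funext k
            exact ofReal_norm _
          rwa [h9] at h8
        have h10 := (ENNReal.continuous_rpow_const (y := (2:ℝ))).tendsto 0 |>.comp h1
        simp only [Function.comp_def] at h10
        rwa [ENNReal.zero_rpow_of_pos (by norm_num : (0:ℝ) < 2)] at h10
  have heq : ∀ k, eLpNorm (B (ns (ms k))) 2 (volume : Measure (EuclideanSpace ℝ (Fin d)))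
      = (∫⁻ x, ((‖B (ns (ms k)) x‖₊ : ℝ≥0∞)) ^ (2:ℝ) ∂volume) ^ (1/2 : ℝ) := by
    intro k
    rw [eLpNorm_eq_lintegral_rpow_enorm_toReal (by norm_num) (by norm_num), ENNReal.toReal_ofNat]
    rfl
  have hfin := (ENNReal.continuous_rpow_const (y := (1/2:ℝ))).tendsto 0 |>.comp hIlim
  simp only [Function.comp_def] at hfin
  rw [ENNReal.zero_rpow_of_pos (by norm_num : (0:ℝ) < 1/2)] at hfin
  show Tendsto (fun k => eLpNorm (B (ns (ms k))) 2 volume) atTop (𝓝 0)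
  simp only [heq]
  exact hfin

/-- Stability of the polar factorization: if `ψ_n → ψ` in `H¹(ℝ^d)`, then the
hydrodynamic quantities converge strongly in `L²`:
`∇√ρ_n → ∇√ρ` and `Λ_n → Λ`. -/

theorem polar_factorization_stability {d : ℕ}
    (ψn : ℕ → EuclideanSpace ℝ (Fin d) → ℂ) (ψ : EuclideanSpace ℝ (Fin d) → ℂ)
    (φn : ℕ → EuclideanSpace ℝ (Fin d) → ℂ) (φ : EuclideanSpace ℝ (Fin d) → ℂ)
    (hψndiff : ∀ n, Differentiable ℝ (ψn n)) (hψdiff : Differentiable ℝ ψ)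
    (hψnL2 : ∀ n, MemLp (ψn n) 2 volume) (hψL2 : MemLp ψ 2 volume)
    (hgradnL2 : ∀ n, MemLp (fun x => fderiv ℝ (ψn n) x) 2 volume)
    (hgradL2 : MemLp (fun x => fderiv ℝ ψ x) 2 volume)
    (hφn : ∀ n, ∀ᵐ x ∂volume, ‖φn n x‖ ≤ 1)
    (hφ : ∀ᵐ x ∂volume, ‖φ x‖ ≤ 1)
    (hpolarn : ∀ n, ∀ᵐ x ∂volume, (‖ψn n x‖ : ℂ) * φn n x = ψn n x)
    (hpolar : ∀ᵐ x ∂volume, (‖ψ x‖ : ℂ) * φ x = ψ x)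
    (hconvL2 : Tendsto (fun n => eLpNorm (fun x => ψn n x - ψ x) 2 volume) atTop (𝓝 0))
    (hconvgrad : Tendsto (fun n =>
        eLpNorm (fun x => fderiv ℝ (ψn n) x - fderiv ℝ ψ x) 2 volume) atTop (𝓝 0)) :
    Tendsto (fun n =>
        eLpNorm (fun x => gradSqrtRho (ψn n) (φn n) x - gradSqrtRho ψ φ x) 2 volume)
      atTop (𝓝 0)
    ∧ Tendsto (fun n =>
        eLpNorm (fun x => lambdaHyd (ψn n) (φn n) x - lambdaHyd ψ φ x) 2 volume)
      atTop (𝓝 0) := by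
  -- the combined complex-valued difference
  set H : ℕ → EuclideanSpace ℝ (Fin d) → EuclideanSpace ℂ (Fin d) :=
    fun n x => cvec (fun i => theta (ψn n) x * pdc i (ψn n) x - theta ψ x * pdc i ψ x)
    with hH
  set A : ℕ → EuclideanSpace ℝ (Fin d) → EuclideanSpace ℂ (Fin d) :=
    fun n x => cvec (fun i => theta (ψn n) x * (pdc i (ψn n) x - pdc i ψ x)) with hA
  set B : ℕ → EuclideanSpace ℝ (Fin d) → EuclideanSpace ℂ (Fin d) :=
    fun n x => cvec (fun i => (theta (ψn n) x - theta ψ x) * pdc i ψ x) with hB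
  have hsplit : ∀ n, H n = fun x => A n x + B n x := by
    intro n
    funext x
    ext i
    show theta (ψn n) x * pdc i (ψn n) x - theta ψ x * pdc i ψ x
      = theta (ψn n) x * (pdc i (ψn n) x - pdc i ψ x)
        + (theta (ψn n) x - theta ψ x) * pdc i ψ x
    ring
  -- strong measurability
  have hsm : ∀ (f1 f2 : EuclideanSpace ℝ (Fin d) → ℂ), Differentiable ℝ f1 →
      ∀ (w : EuclideanSpace ℝ (Fin d) → ℂ), Measurable w →
      StronglyMeasurable (fun x => cvec (fun i => w x * pdc i f1 x)) := by
    intro f1 f2 hf1 w hw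
    have hpi : Measurable (fun x => (fun i => w x * pdc i f1 x : Fin d → ℂ)) :=
      measurable_pi_lambda _ fun i => hw.mul (measurable_pdc i f1)
    exact (EuclideanSpace.equiv (Fin d) ℂ).symm.continuous.comp_stronglyMeasurable
      hpi.stronglyMeasurable
  have hsmA : ∀ n, AEStronglyMeasurable (A n) volume := by
    intro n
    have hpi : Measurable (fun x =>
        (fun i => theta (ψn n) x * (pdc i (ψn n) x - pdc i ψ x) : Fin d → ℂ)) :=
      measurable_pi_lambda _ fun i =>
        (measurable_theta _ (hψndiff n).continuous).mul
          ((measurable_pdc i (ψn n)).sub (measurable_pdc i ψ))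
    exact ((PiLp.continuous_toLp 2 _).comp_stronglyMeasurable
      hpi.stronglyMeasurable).aestronglyMeasurable
  have hsmB : ∀ n, AEStronglyMeasurable (B n) volume := by
    intro n
    have hpi : Measurable (fun x =>
        (fun i => (theta (ψn n) x - theta ψ x) * pdc i ψ x : Fin d → ℂ)) :=
      measurable_pi_lambda _ fun i =>
        ((measurable_theta _ (hψndiff n).continuous).sub
          (measurable_theta _ hψdiff.continuous)).mul (measurable_pdc i ψ)
    exact ((PiLp.continuous_toLp 2 _).comp_stronglyMeasurable
      hpi.stronglyMeasurable).aestronglyMeasurable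
  -- A-term converges to 0 in L²
  have hAconv : Tendsto (fun n => eLpNorm (A n) 2 volume) atTop (𝓝 0) := by
    have hle : ∀ n, eLpNorm (A n) 2 volume
        ≤ (‖Real.sqrt d‖₊ : ℝ≥0∞) *
          eLpNorm (fun x => fderiv ℝ (ψn n) x - fderiv ℝ ψ x) 2 volume := by
      intro n
      have hptw : ∀ x, ‖A n x‖ ≤
          Real.sqrt d * ‖fderiv ℝ (ψn n) x - fderiv ℝ ψ x‖ := by
        intro x
        apply euclid_norm_le_of_forall _ (norm_nonneg _)
        intro i
        show ‖theta (ψn n) x * (pdc i (ψn n) x - pdc i ψ x)‖ ≤ _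
        rw [norm_mul]
        have h1 : pdc i (ψn n) x - pdc i ψ x
            = (fderiv ℝ (ψn n) x - fderiv ℝ ψ x) (EuclideanSpace.single i 1) := by
          simp [pdc]
        have h2 : ‖pdc i (ψn n) x - pdc i ψ x‖
            ≤ ‖fderiv ℝ (ψn n) x - fderiv ℝ ψ x‖ := by
          rw [h1]
          have h3 := (fderiv ℝ (ψn n) x - fderiv ℝ ψ x).le_opNorm
            (EuclideanSpace.single i 1)
          rwa [EuclideanSpace.norm_single, norm_one, mul_one] at h3
        calc ‖theta (ψn n) x‖ * ‖pdc i (ψn n) x - pdc i ψ x‖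
            ≤ 1 * ‖fderiv ℝ (ψn n) x - fderiv ℝ ψ x‖ :=
              mul_le_mul (theta_norm_le _ _) h2 (norm_nonneg _) zero_le_one
          _ = ‖fderiv ℝ (ψn n) x - fderiv ℝ ψ x‖ := one_mul _
      calc eLpNorm (A n) 2 volume
          ≤ eLpNorm (fun x => Real.sqrt d * ‖fderiv ℝ (ψn n) x - fderiv ℝ ψ x‖) 2 volume :=
            eLpNorm_mono_real fun x => hptw x
        _ = eLpNorm ((Real.sqrt d : ℝ) •
              (fun x => ‖fderiv ℝ (ψn n) x - fderiv ℝ ψ x‖)) 2 volume := rfl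
        _ = (‖Real.sqrt d‖₊ : ℝ≥0∞) *
              eLpNorm (fun x => ‖fderiv ℝ (ψn n) x - fderiv ℝ ψ x‖) 2 volume := by
            rw [eLpNorm_const_smul, enorm_eq_nnnorm]
        _ = (‖Real.sqrt d‖₊ : ℝ≥0∞) *
              eLpNorm (fun x => fderiv ℝ (ψn n) x - fderiv ℝ ψ x) 2 volume := by
            rw [eLpNorm_norm]
    have hconst : Tendsto (fun n => (‖Real.sqrt d‖₊ : ℝ≥0∞) *
        eLpNorm (fun x => fderiv ℝ (ψn n) x - fderiv ℝ ψ x) 2 volume) atTop (𝓝 0) := by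
      have := ENNReal.Tendsto.const_mul hconvgrad
        (Or.inr (ENNReal.coe_ne_top (r := ‖Real.sqrt d‖₊)))
      simpa using this
    exact tendsto_of_tendsto_of_tendsto_of_le_of_le tendsto_const_nhds hconst
      (fun n => zero_le) hle
  -- B-term converges to 0 in L²
  have hBconv : Tendsto (fun n => eLpNorm (B n) 2 volume) atTop (𝓝 0) :=
    Bterm_tendsto ψn ψ hψndiff hψdiff hψnL2 hψL2 hgradL2 hconvL2
  -- combined convergence
  have hHconv : Tendsto (fun n => eLpNorm (H n) 2 volume) atTop (𝓝 0) := by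
    have hle : ∀ n, eLpNorm (H n) 2 volume
        ≤ eLpNorm (A n) 2 volume + eLpNorm (B n) 2 volume := by
      intro n
      rw [hsplit n]
      exact eLpNorm_add_le (hsmA n) (hsmB n) one_le_two
    have hsum : Tendsto (fun n => eLpNorm (A n) 2 volume + eLpNorm (B n) 2 volume)
        atTop (𝓝 0) := by
      have := hAconv.add hBconv
      simpa using this
    exact tendsto_of_tendsto_of_tendsto_of_le_of_le tendsto_const_nhds hsum
      (fun n => zero_le) hle
  -- congruence with the polar factors
  have hkeyn : ∀ n, ∀ᵐ x ∂(volume : Measure (EuclideanSpace ℝ (Fin d))),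
      ∀ i, (starRingEnd ℂ) (φn n x) * pdc i (ψn n) x = theta (ψn n) x * pdc i (ψn n) x :=
    fun n => polar_theta (ψn n) (φn n) (hψndiff n) (hpolarn n)
  have hkey : ∀ᵐ x ∂(volume : Measure (EuclideanSpace ℝ (Fin d))),
      ∀ i, (starRingEnd ℂ) (φ x) * pdc i ψ x = theta ψ x * pdc i ψ x :=
    polar_theta ψ φ hψdiff hpolar
  constructor
  · -- gradSqrtRho part
    have hcongr : ∀ n, (fun x => gradSqrtRho (ψn n) (φn n) x - gradSqrtRho ψ φ x)
        =ᵐ[(volume : Measure (EuclideanSpace ℝ (Fin d)))]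
        (fun x => rvec (fun i => (H n x i).re)) := by
      intro n
      filter_upwards [hkeyn n, hkey] with x e1 e2
      ext i
      show ((starRingEnd ℂ) (φn n x) * pdc i (ψn n) x).re
          - ((starRingEnd ℂ) (φ x) * pdc i ψ x).re = _
      rw [e1 i, e2 i]
      show _ = (theta (ψn n) x * pdc i (ψn n) x - theta ψ x * pdc i ψ x).re
      rw [Complex.sub_re]
    have heq : (fun n => eLpNorm
          (fun x => gradSqrtRho (ψn n) (φn n) x - gradSqrtRho ψ φ x) 2 volume)
        = fun n => eLpNorm (fun x => rvec (fun i => (H n x i).re)) 2 volume :=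
      funext fun n => eLpNorm_congr_ae (hcongr n)
    rw [heq]
    have hle : ∀ n, eLpNorm (fun x => rvec (fun i => (H n x i).re)) 2 volume
        ≤ eLpNorm (H n) 2 volume := by
      intro n
      apply eLpNorm_mono
      intro x
      apply euclid_norm_le
      intro i
      show ‖(H n x i).re‖ ≤ ‖H n x i‖
      rw [Real.norm_eq_abs]
      exact Complex.abs_re_le_norm _
    exact tendsto_of_tendsto_of_tendsto_of_le_of_le tendsto_const_nhds hHconv
      (fun n => zero_le) hle
  · -- lambdaHyd part
    have hcongr : ∀ n, (fun x => lambdaHyd (ψn n) (φn n) x - lambdaHyd ψ φ x)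
        =ᵐ[(volume : Measure (EuclideanSpace ℝ (Fin d)))]
        (fun x => rvec (fun i => (H n x i).im)) := by
      intro n
      filter_upwards [hkeyn n, hkey] with x e1 e2
      ext i
      show ((starRingEnd ℂ) (φn n x) * pdc i (ψn n) x).im
          - ((starRingEnd ℂ) (φ x) * pdc i ψ x).im = _
      rw [e1 i, e2 i]
      show _ = (theta (ψn n) x * pdc i (ψn n) x - theta ψ x * pdc i ψ x).im
      rw [Complex.sub_im]
    have heq : (fun n => eLpNorm
          (fun x => lambdaHyd (ψn n) (φn n) x - lambdaHyd ψ φ x) 2 volume)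
        = fun n => eLpNorm (fun x => rvec (fun i => (H n x i).im)) 2 volume :=
      funext fun n => eLpNorm_congr_ae (hcongr n)
    rw [heq]
    have hle : ∀ n, eLpNorm (fun x => rvec (fun i => (H n x i).im)) 2 volume
        ≤ eLpNorm (H n) 2 volume := by
      intro n
      apply eLpNorm_mono
      intro x
      apply euclid_norm_le
      intro i
      show ‖(H n x i).im‖ ≤ ‖H n x i‖
      rw [Real.norm_eq_abs]
      exact Complex.abs_im_le_norm _
    exact tendsto_of_tendsto_of_tendsto_of_le_of_le tendsto_const_nhds hHconv
      (fun n => zero_le) hle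

end
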